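/- Let G be a finite group with a 3-cocycle ω : G × G × G → kˣ, and define γ(g,h;x) = ω(g,h,x)·ω(ghx h⁻¹g⁻¹, g, h)/ω(g, hxh⁻¹, h). Then for each x ∈ G, the map (g,h) ↦ γ(g,h;x) is a 2-cocycle on the centralizer Z(x) = {g ∈ G : gx = xg}. -/

import Mathlib

/-- Let `ω` be a normalized 3-cocycle on a finite group `G` valued in `kˣ` and
define `γ(g,h;x) = ω(g,h,x) ω(ghxh⁻¹g⁻¹, g, h) / ω(g, hxh⁻¹, h)`. Then for every `x ∈ G` the
map `(g,h) ↦ γ(g,h;x)` is a 2-cocycle on the centralizer `Z(x)`. -/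
theorem gamma_is_cocycle_on_centralizer
    {k : Type*} [Field k] {G : Type*} [Group G] [Finite G]
    (ω : G → G → G → kˣ)
    (hcoc : ∀ g h l m : G,
      ω g h l * ω g (h * l) m * ω h l m = ω (g * h) l m * ω g h (l * m))
    (hnorm : ∀ g h : G, ω 1 g h = 1 ∧ ω g 1 h = 1 ∧ ω g h 1 = 1)
    (γ : G → G → G → kˣ)
    (hγ : ∀ g h x : G,
      γ g h x = ω g h x * ω (g * h * x * h⁻¹ * g⁻¹) g h / ω g (h * x * h⁻¹) h) :
    ∀ x : G, ∀ g ∈ Subgroup.centralizer {x}, ∀ h ∈ Subgroup.centralizer {x},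
      ∀ l ∈ Subgroup.centralizer {x},
        γ g h x * γ (g * h) l x = γ g (h * l) x * γ h l x := by
  intro x g hg h hh l hl
  rw [Subgroup.mem_centralizer_iff] at hg hh hl
  have cg : x * g = g * x := hg x rfl
  have ch : x * h = h * x := hh x rfl
  have cl : x * l = l * x := hl x rfl
  -- conjugation lemmas
  have conj : ∀ a : G, x * a = a * x → a * x * a⁻¹ = x := by
    intro a ha
    rw [← ha, mul_inv_cancel_right]
  have jg : g * x * g⁻¹ = x := conj g cg
  have jh : h * x * h⁻¹ = x := conj h ch
  have jl : l * x * l⁻¹ = x := conj l cl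
  have chl : x * (h * l) = (h * l) * x := by
    rw [← mul_assoc, ch, mul_assoc, cl, mul_assoc]
  have jhl : (h * l) * x * (h * l)⁻¹ = x := conj _ chl
  have j1 : g * h * x * h⁻¹ * g⁻¹ = x := by
    have : g * h * x * h⁻¹ * g⁻¹ = g * (h * x * h⁻¹) * g⁻¹ := by group
    rw [this, jh, jg]
  have j2 : g * h * l * x * l⁻¹ * (g * h)⁻¹ = x := by
    have e : g * h * l * x * l⁻¹ * (g * h)⁻¹ = g * (h * (l * x * l⁻¹) * h⁻¹) * g⁻¹ := by
      group
    rw [e, jl, jh, jg]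
  have j3 : g * (h * l) * x * (h * l)⁻¹ * g⁻¹ = x := by
    have e : g * (h * l) * x * (h * l)⁻¹ * g⁻¹ = g * ((h * l) * x * (h * l)⁻¹) * g⁻¹ := by
      group
    rw [e, jhl, jg]
  have j4 : h * l * x * l⁻¹ * h⁻¹ = x := by
    have e : h * l * x * l⁻¹ * h⁻¹ = h * (l * x * l⁻¹) * h⁻¹ := by group
    rw [e, jl, jh]
  rw [hγ g h x, hγ (g * h) l x, hγ g (h * l) x, hγ h l x, j1, jh, j2, jl, j3, jhl, j4]
  -- pass to `k`
  rw [← Units.val_inj]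
  push_cast
  -- four instances of the cocycle identity, with arguments normalized using commutation
  have E1 : (ω g h l : k) * ω g (h * l) x * ω h l x = ω (g * h) l x * ω g h (l * x) := by
    exact_mod_cast congrArg Units.val (hcoc g h l x)
  have E2 : (ω g h x : k) * ω g (x * h) l * ω h x l = ω (g * h) x l * ω g h (l * x) := by
    have e := hcoc g h x l
    rw [← ch, cl] at e
    exact_mod_cast congrArg Units.val e
  have E3 : (ω g x h : k) * ω g (x * h) l * ω x h l = ω (x * g) h l * ω g x (h * l) := by
    have e := hcoc g x h l
    rw [← cg] at e
    exact_mod_cast congrArg Units.val e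
  have E4 : (ω x g h : k) * ω x (g * h) l * ω g h l = ω (x * g) h l * ω x g (h * l) := by
    exact_mod_cast congrArg Units.val (hcoc x g h l)
  rw [div_mul_div_comm, div_mul_div_comm,
    div_eq_div_iff (mul_ne_zero (Units.ne_zero _) (Units.ne_zero _))
      (mul_ne_zero (Units.ne_zero _) (Units.ne_zero _))]
  -- cancel the auxiliary factor F
  have hF : ((ω g (x * h) l : k) * ω g h l * ω g h (l * x) * ω (x * g) h l) ≠ 0 := by
    exact mul_ne_zero (mul_ne_zero (mul_ne_zero (Units.ne_zero _) (Units.ne_zero _))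
      (Units.ne_zero _)) (Units.ne_zero _)
  apply mul_right_cancel₀ hF
  linear_combination
    ((ω x g h : k) * ω x (g * h) l * ω g h l) * ((ω (g * h) l x : k) * ω g h (l * x)) *
        ((ω (x * g) h l : k) * ω g x (h * l)) * E2 +
      ((ω (g * h) x l : k) * ω g h (l * x)) * ((ω (g * h) l x : k) * ω g h (l * x)) *
        ((ω (x * g) h l : k) * ω g x (h * l)) * E4 -
      ((ω (g * h) x l : k) * ω g h (l * x)) * ((ω (x * g) h l : k) * ω x g (h * l)) *
        ((ω (x * g) h l : k) * ω g x (h * l)) * E1 -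
      ((ω (g * h) x l : k) * ω g h (l * x)) * ((ω (x * g) h l : k) * ω x g (h * l)) *
        ((ω g h l : k) * ω g (h * l) x * ω h l x) * E3
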